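/- Let (X, μ) be a probability space and let C ⊆ L²(X, μ) be the set of functions of the form Σᵢ tᵢ c_{Yᵢ} + z, where tᵢ ≥ 0 sum to 1, each c_{Yᵢ} is the indicator of a measurable set Yᵢ belonging to a fixed family 𝒮 of measurable sets, and z ≥ 0 is bounded measurable. If the constant function ε does not belong to the closure of C in L², then there exists a nonnegative W ∈ L²(X, μ) such that ∫_X W · ε dμ < ∫_Y W dμ for every Y ∈ 𝒮. -/

import Mathlib

open MeasureTheory

/-- Hahn–Banach separation in `L²`: if the constant function `ε` is not in the closure of
the convex set `C` of functions of the form `Σᵢ tᵢ·𝟙_{Yᵢ} + z` (`Yᵢ ∈ 𝒮`, `tᵢ ≥ 0`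
summing to `1`, `z ≥ 0` bounded measurable), then there is a nonnegative `W ∈ L²` with
`∫ W·ε dμ < ∫_Y W dμ` for every `Y ∈ 𝒮`. -/
theorem stmt6 {X : Type*} [MeasurableSpace X] (μ : Measure X) [IsProbabilityMeasure μ]
    (𝒮 : Set (Set X)) (h𝒮ne : 𝒮.Nonempty) (h𝒮meas : ∀ Y ∈ 𝒮, MeasurableSet Y)
    (ε : ℝ) (hε : 0 < ε)
    (C : Set (Lp ℝ 2 μ))
    (hCdef : ∀ f : Lp ℝ 2 μ, f ∈ C ↔
      ∃ (n : ℕ) (t : Fin n → ℝ) (Y : Fin n → Set X) (z : X → ℝ),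
        (∀ i, 0 ≤ t i) ∧ (∑ i, t i = 1) ∧ (∀ i, Y i ∈ 𝒮) ∧
        (∀ x, 0 ≤ z x) ∧ Measurable z ∧ (∃ b : ℝ, ∀ x, z x ≤ b) ∧
        (f : X → ℝ) =ᵐ[μ] fun x => (∑ i, t i * (Y i).indicator (fun _ => (1:ℝ)) x) + z x)
    (hnot : ¬ ∃ f ∈ closure C, (f : X → ℝ) =ᵐ[μ] fun _ => ε) :
    ∃ W : X → ℝ, (∀ x, 0 ≤ W x) ∧ MemLp W 2 μ ∧
      ∀ Y ∈ 𝒮, ∫ x, W x * ε ∂μ < ∫ x in Y, W x ∂μ := by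
  classical
  have hεmem : MemLp (fun _ : X => ε) 2 μ := memLp_const ε
  set εL : Lp ℝ 2 μ := hεmem.toLp _ with hεLdef
  have hεLnot : εL ∉ closure C := fun h => hnot ⟨εL, h, hεmem.coeFn_toLp⟩
  -- convexity of C
  have hCconv : Convex ℝ C := by
    intro f hf g hg a b ha hb hab
    rw [hCdef] at hf hg ⊢
    obtain ⟨n, t, Y, z, ht0, ht1, hY, hz0, hzm, ⟨bz, hbz⟩, hfe⟩ := hf
    obtain ⟨m, s, Z, v, hs0, hs1, hZ, hv0, hvm, ⟨bv, hbv⟩, hge⟩ := hg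
    refine ⟨n + m, Fin.addCases (fun i => a * t i) (fun j => b * s j),
      Fin.addCases Y Z, fun x => a * z x + b * v x, ?_, ?_, ?_, ?_, ?_,
      ⟨a * bz + b * bv, ?_⟩, ?_⟩
    · intro i
      refine Fin.addCases (fun i => ?_) (fun j => ?_) i
      · simpa using mul_nonneg ha (ht0 i)
      · simpa using mul_nonneg hb (hs0 j)
    · rw [Fin.sum_univ_add]
      simp only [Fin.addCases_left, Fin.addCases_right, ← Finset.mul_sum, ht1, hs1]
      simpa using hab
    · intro i
      refine Fin.addCases (fun i => ?_) (fun j => ?_) i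
      · simpa using hY i
      · simpa using hZ j
    · intro x
      exact add_nonneg (mul_nonneg ha (hz0 x)) (mul_nonneg hb (hv0 x))
    · exact (hzm.const_mul a).add (hvm.const_mul b)
    · intro x
      exact add_le_add (mul_le_mul_of_nonneg_left (hbz x) ha)
        (mul_le_mul_of_nonneg_left (hbv x) hb)
    · filter_upwards [Lp.coeFn_add (a • f) (b • g), Lp.coeFn_smul a f, Lp.coeFn_smul b g,
        hfe, hge] with x h1 h2 h3 h4 h5
      rw [h1]
      simp only [Pi.add_apply, h2, h3, Pi.smul_apply, smul_eq_mul, h4, h5]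
      rw [Fin.sum_univ_add]
      simp only [Fin.addCases_left, Fin.addCases_right]
      rw [mul_add, mul_add, Finset.mul_sum, Finset.mul_sum]
      simp only [mul_assoc]
      ring
  haveI : Fact ((1:ENNReal) ≤ 2) := ⟨one_le_two⟩
  obtain ⟨φ, u, hu1, hu2⟩ :=
    geometric_hahn_banach_point_closed hCconv.closure isClosed_closure hεLnot
  set w : Lp ℝ 2 μ := (InnerProductSpace.toDual ℝ (Lp ℝ 2 μ)).symm φ with hwdef
  have hφinner : ∀ g : Lp ℝ 2 μ, φ g = inner ℝ w g := by
    intro g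
    conv_lhs => rw [← (InnerProductSpace.toDual ℝ (Lp ℝ 2 μ)).apply_symm_apply φ]
    rw [InnerProductSpace.toDual_apply_apply]
  have hφ : ∀ g : Lp ℝ 2 μ, φ g = ∫ x, (w : X → ℝ) x * (g : X → ℝ) x ∂μ := by
    intro g
    rw [hφinner, L2.inner_def]
    simp [RCLike.inner_apply, mul_comm]
  obtain ⟨Y₀, hY₀⟩ := h𝒮ne
  -- membership helper
  have hmem1 : ∀ (Y : Set X), Y ∈ 𝒮 → ∀ (z : X → ℝ), (∀ x, 0 ≤ z x) → Measurable z →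
      ∀ b : ℝ, (∀ x, z x ≤ b) → ∀ (zL : Lp ℝ 2 μ), (zL : X → ℝ) =ᵐ[μ] z →
      ∀ hY : Y ∈ 𝒮,
      (indicatorConstLp 2 (h𝒮meas Y hY) (measure_ne_top μ Y) (1:ℝ) + zL) ∈ C := by
    intro Y hYmem z hz0 hzm b hzb zL hzL hY
    rw [hCdef]
    refine ⟨1, fun _ => 1, fun _ => Y, z, fun _ => zero_le_one, by simp, fun _ => hYmem,
      hz0, hzm, ⟨b, hzb⟩, ?_⟩
    filter_upwards [Lp.coeFn_add (indicatorConstLp 2 (h𝒮meas Y hY) (measure_ne_top μ Y) (1:ℝ)) zL,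
      indicatorConstLp_coeFn (p := 2) (hs := h𝒮meas Y hY) (hμs := measure_ne_top μ Y)
        (c := (1:ℝ)), hzL] with x h1 h2 h3
    rw [h1]
    simp only [Pi.add_apply, h2, h3, Fin.sum_univ_one, one_mul]
  have hIC : ∀ Y : Set X, ∀ hY : Y ∈ 𝒮,
      indicatorConstLp 2 (h𝒮meas Y hY) (measure_ne_top μ Y) (1:ℝ) ∈ C := by
    intro Y hY
    have h0 : ((0 : Lp ℝ 2 μ) : X → ℝ) =ᵐ[μ] (fun _ => 0) := Lp.coeFn_zero ℝ 2 μ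
    have := hmem1 Y hY (fun _ => 0) (fun _ => le_rfl) measurable_const 0 (fun _ => le_rfl) 0 h0 hY
    simpa using this
  -- φ nonneg on nonneg bounded functions
  have hφnn : ∀ (z : X → ℝ), (∀ x, 0 ≤ z x) → Measurable z → ∀ b : ℝ, (∀ x, z x ≤ b) →
      0 ≤ ∫ x, (w : X → ℝ) x * z x ∂μ := by
    intro z hz0 hzm b hzb
    by_contra hneg
    push_neg at hneg
    have hzmem : MemLp z 2 μ := MemLp.of_bound hzm.aestronglyMeasurable (max b 0)
      (ae_of_all _ fun x => by
        rw [Real.norm_eq_abs, abs_of_nonneg (hz0 x)]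
        exact le_max_of_le_left (hzb x))
    set I := indicatorConstLp 2 (h𝒮meas Y₀ hY₀) (measure_ne_top μ Y₀) (1:ℝ) with hIdef
    set c := ∫ x, (w : X → ℝ) x * z x ∂μ with hcdef
    have hIu : u < φ I := hu2 I (subset_closure (hIC Y₀ hY₀))
    set τ := (u - φ I) / c with hτdef
    have hτpos : 0 < τ := div_pos_of_neg_of_neg (by linarith) hneg
    have hzLcoe : ((τ • hzmem.toLp z : Lp ℝ 2 μ) : X → ℝ) =ᵐ[μ] fun x => τ * z x := by
      filter_upwards [Lp.coeFn_smul τ (hzmem.toLp z), hzmem.coeFn_toLp] with x h1 h2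
      simp [h1, h2]
    have hmem : (I + τ • hzmem.toLp z) ∈ C :=
      hmem1 Y₀ hY₀ (fun x => τ * z x) (fun x => mul_nonneg hτpos.le (hz0 x))
        (hzm.const_mul τ) (τ * max b 0)
        (fun x => mul_le_mul_of_nonneg_left (le_max_of_le_left (hzb x)) hτpos.le)
        _ hzLcoe hY₀
    have hφz : φ (hzmem.toLp z) = c := by
      rw [hφ, hcdef]
      refine integral_congr_ae ?_
      filter_upwards [hzmem.coeFn_toLp] with x hx
      rw [hx]
    have := hu2 _ (subset_closure hmem)
    rw [map_add, ContinuousLinearMap.map_smul, smul_eq_mul, hφz, hτdef] at this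
    rw [div_mul_cancel₀ _ (ne_of_lt hneg)] at this
    linarith
  -- w is a.e. nonneg
  have hwnn : ∀ᵐ x ∂μ, 0 ≤ (w : X → ℝ) x := by
    set S : Set X := {x | (w : X → ℝ) x < 0} with hSdef
    have hS : MeasurableSet S := measurableSet_lt (Lp.stronglyMeasurable w).measurable
      measurable_const
    have h1 : 0 ≤ ∫ x, (w : X → ℝ) x * S.indicator (fun _ => (1:ℝ)) x ∂μ := by
      refine hφnn _ (fun x => Set.indicator_nonneg (fun _ _ => zero_le_one) x)
        (measurable_const.indicator hS) 1 (fun x => Set.indicator_le_self' (fun _ _ => zero_le_one) x)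
    have heq : (fun x => (w : X → ℝ) x * S.indicator (fun _ => (1:ℝ)) x)
        = S.indicator (fun x => (w : X → ℝ) x) := by
      ext x
      by_cases hx : x ∈ S <;> simp [Set.indicator_of_mem, Set.indicator_of_notMem, hx]
    rw [heq] at h1
    have hwint : Integrable (w : X → ℝ) μ := (Lp.memLp w).integrable one_le_two
    have hnonneg' : ∀ x, 0 ≤ S.indicator (fun x => -(w : X → ℝ) x) x := by
      intro x
      by_cases hx : x ∈ S
      · simp only [Set.indicator_of_mem hx]
        have : (w : X → ℝ) x < 0 := hx
        linarith
      · simp [Set.indicator_of_notMem hx]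
    have hnonneg : 0 ≤ fun x => S.indicator (fun x => -(w : X → ℝ) x) x :=
      Pi.le_def.mpr hnonneg'
    have hint : Integrable (fun x => S.indicator (fun x => -(w : X → ℝ) x) x) μ :=
      (hwint.neg.indicator hS)
    have hzero : ∫ x, S.indicator (fun x => -(w : X → ℝ) x) x ∂μ = 0 := by
      have hneg : ∫ x, S.indicator (fun x => -(w : X → ℝ) x) x ∂μ
          = - ∫ x, S.indicator (fun x => (w : X → ℝ) x) x ∂μ := by
        rw [← integral_neg]
        congr 1
        ext x
        by_cases hx : x ∈ S <;> simp [Set.indicator_of_mem, Set.indicator_of_notMem, hx]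
      have hle : ∫ x, S.indicator (fun x => -(w : X → ℝ) x) x ∂μ ≤ 0 := by
        rw [hneg]; linarith
      have hge : 0 ≤ ∫ x, S.indicator (fun x => -(w : X → ℝ) x) x ∂μ :=
        integral_nonneg hnonneg
      linarith
    have := (integral_eq_zero_iff_of_nonneg hnonneg hint).mp hzero
    filter_upwards [this] with x hx
    simp only [Set.indicator_apply, Pi.zero_apply] at hx
    by_contra hxneg
    push_neg at hxneg
    have hxS : x ∈ S := hxneg
    rw [if_pos hxS] at hx
    linarith
  -- define W
  refine ⟨fun x => max ((w : X → ℝ) x) 0, fun x => le_max_right _ _, ?_, ?_⟩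
  · exact (Lp.memLp w).ae_eq (by filter_upwards [hwnn] with x hx; exact (max_eq_left hx).symm)
  · intro Y hY
    set I := indicatorConstLp 2 (h𝒮meas Y hY) (measure_ne_top μ Y) (1:ℝ) with hIdef
    have hWw : (fun x => max ((w : X → ℝ) x) 0) =ᵐ[μ] (w : X → ℝ) := by
      filter_upwards [hwnn] with x hx; exact max_eq_left hx
    have hl : ∫ x, max ((w : X → ℝ) x) 0 * ε ∂μ = φ εL := by
      rw [hφ]
      refine integral_congr_ae ?_
      filter_upwards [hWw, hεmem.coeFn_toLp] with x h1 h2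
      rw [h1, h2]
    have hr : φ I = ∫ x in Y, max ((w : X → ℝ) x) 0 ∂μ := by
      rw [hφinner, ← real_inner_comm, hIdef, L2.inner_indicatorConstLp_one]
      exact setIntegral_congr_ae (h𝒮meas Y hY)
        (by filter_upwards [hWw] with x hx _; exact hx.symm)
    have h2 : u < φ I := hu2 I (subset_closure (hIC Y hY))
    rw [hl, ← hr]
    linarith
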